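/- Let V be a vector space over ℝ, let P and P̂ be linear endomorphisms of V, let r, r̂ ∈ V, and let H ∈ ℕ. Define Q_h := Σ_{j=0}^{H−h} P^j r for h = 0, 1, …, H, set Q_{H+1} := 0, and define Q̂_0 := Σ_{h=0}^{H} P̂^h r̂. Then Q_0 − Q̂_0 = Σ_{h=0}^{H} P̂^h ( Q_h − (r̂ + P̂ Q_{h+1}) ). -/
import Mathlib

open Finset

/-- **Decomposition of the Q-function estimation error into propagated one-step Bellman
errors.**  With `Q_h = Σ_{j=0}^{H−h} P^j r`, `Q_{H+1} = 0` and `Q̂₀ = Σ_{h=0}^H P̂^h r̂`,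
one has `Q₀ − Q̂₀ = Σ_{h=0}^H P̂^h (Q_h − (r̂ + P̂ Q_{h+1}))`. -/
theorem q_error_telescoping {V : Type*} [AddCommGroup V] [Module ℝ V]
    (P Phat : V →ₗ[ℝ] V) (r rhat : V) (H : ℕ)
    (Q : ℕ → V)
    (hQ : ∀ h ≤ H, Q h = ∑ j ∈ Finset.range (H - h + 1), (P ^ j) r)
    (hQtop : Q (H + 1) = 0)
    (Qhat0 : V) (hQhat0 : Qhat0 = ∑ h ∈ Finset.range (H + 1), (Phat ^ h) rhat) :
    Q 0 - Qhat0
      = ∑ h ∈ Finset.range (H + 1), (Phat ^ h) (Q h - (rhat + Phat (Q (h + 1)))) := by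
  have key : ∀ h, (Phat ^ h) (Q h - (rhat + Phat (Q (h + 1))))
      = ((Phat ^ h) (Q h) - (Phat ^ (h + 1)) (Q (h + 1))) - (Phat ^ h) rhat := by
    intro h
    simp [map_sub, map_add, pow_succ, Module.End.mul_apply]
    abel
  calc Q 0 - Qhat0
      = (Q 0 - (Phat ^ (H + 1)) (Q (H + 1))) - ∑ h ∈ Finset.range (H + 1), (Phat ^ h) rhat := by
        rw [hQhat0, hQtop]; simp
    _ = (∑ h ∈ Finset.range (H + 1),
          ((Phat ^ h) (Q h) - (Phat ^ (h + 1)) (Q (h + 1))))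
        - ∑ h ∈ Finset.range (H + 1), (Phat ^ h) rhat := by
        rw [Finset.sum_range_sub' (fun h => (Phat ^ h) (Q h))]
        simp
    _ = ∑ h ∈ Finset.range (H + 1), (Phat ^ h) (Q h - (rhat + Phat (Q (h + 1)))) := by
        rw [← Finset.sum_sub_distrib]
        exact (Finset.sum_congr rfl fun h _ => (key h).symm)
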